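/- (Exact moment generating function of Z − W) Let W and Z be independent. For every θ ∈ ℝ, E[ e^{θ(Z − W)} ] = 1 + C(θ)·(log n / n) + D(θ)·(log n / n)², where, writing α* = ∑_{i=1}^m α_i and β* = ∑_{i=1}^m β_i: C(θ) = −α* − β* + ∑_{i=1}^m [ α_i (β_i/α_i)^θ + β_i (α_i/β_i)^θ ] and D(θ) = ∑_{i=1}^m α_i β_i + α* β* − ∑_{i=1}^m ( α* β_i (α_i/β_i)^θ + β* α_i (β_i/α_i)^θ ) + ∑_{i≠j} α_i β_j ( (α_j β_i)/(β_j α_i) )^θ. -/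

import Mathlib

open MeasureTheory Finset Filter
open scoped Classical ENNReal

/-- Law of `W`: value `log (p_k/q_k)` with probability `p_k`, `0` otherwise. -/
noncomputable def Wdist {m : ℕ} (p q : Fin m → ℝ) : Measure ℝ :=
  (1 - ∑ k, ENNReal.ofReal (p k)) • Measure.dirac 0
    + ∑ k, ENNReal.ofReal (p k) • Measure.dirac (Real.log (p k / q k))
/-- Law of `Z`: value `log (p_k/q_k)` with probability `q_k`, `0` otherwise. -/
noncomputable def Zdist {m : ℕ} (p q : Fin m → ℝ) : Measure ℝ :=
  (1 - ∑ k, ENNReal.ofReal (q k)) • Measure.dirac 0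
    + ∑ k, ENNReal.ofReal (q k) • Measure.dirac (Real.log (p k / q k))

lemma intmix {m : ℕ} (c : ℝ≥0∞) (hc : c ≠ ⊤) (a : Fin m → ℝ≥0∞) (ha : ∀ k, a k ≠ ⊤)
    (x : Fin m → ℝ) (f : ℝ → ℝ) (hf : Measurable f) :
    ∫ t, f t ∂(c • Measure.dirac 0 + ∑ k, a k • Measure.dirac (x k)) =
      c.toReal * f 0 + ∑ k, (a k).toReal * f (x k) := by
  have hint : ∀ (d : ℝ≥0∞), d ≠ ⊤ → ∀ y : ℝ, Integrable f (d • Measure.dirac y) := by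
    intro d hd y
    refine ⟨hf.aestronglyMeasurable, ?_⟩
    rw [hasFiniteIntegral_def, lintegral_smul_measure, lintegral_dirac]
    exact ENNReal.mul_lt_top hd.lt_top (by simp)
  rw [integral_add_measure (hint c hc 0)
      (integrable_finset_sum_measure.2 fun k _ => hint (a k) (ha k) (x k)),
    integral_finset_sum_measure (fun k _ => hint (a k) (ha k) (x k))]
  simp [integral_smul_measure, integral_dirac]

lemma finmix {m : ℕ} (c : ℝ≥0∞) (hc : c ≠ ⊤) (a : Fin m → ℝ≥0∞) (ha : ∀ k, a k ≠ ⊤)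
    (x : Fin m → ℝ) :
    IsFiniteMeasure (c • Measure.dirac 0 + ∑ k, a k • Measure.dirac (x k)) := by
  constructor
  rw [Measure.add_apply, Measure.finset_sum_apply]
  simp only [Measure.smul_apply, smul_eq_mul, Measure.dirac_apply_of_mem (Set.mem_univ _),
    mul_one]
  exact ENNReal.add_lt_top.2 ⟨hc.lt_top, (ENNReal.sum_lt_top).2 fun k _ => (ha k).lt_top⟩

theorem mgf_exact (m : ℕ) (hm : 0 < m) (α β : Fin m → ℝ)
    (hα : ∀ i, 0 < α i) (hβ : ∀ i, 0 < β i)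
    (n : ℕ) (hn : 2 ≤ n)
    (hp1 : ∑ i, α i * Real.log n / n ≤ 1) (hq1 : ∑ i, β i * Real.log n / n ≤ 1)
    (θ : ℝ) :
    (∫ x : ℝ × ℝ, Real.exp (θ * (x.1 - x.2))
        ∂((Zdist (fun i => α i * Real.log n / n) (fun i => β i * Real.log n / n)).prod
          (Wdist (fun i => α i * Real.log n / n) (fun i => β i * Real.log n / n)))) =
      1 +
        (-(∑ i, α i) - (∑ i, β i) +
            ∑ i, (α i * (β i / α i) ^ θ + β i * (α i / β i) ^ θ)) *
          (Real.log n / n) +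
        ((∑ i, α i * β i) + (∑ i, α i) * (∑ i, β i) -
            (∑ i, ((∑ j, α j) * β i * (α i / β i) ^ θ +
              (∑ j, β j) * α i * (β i / α i) ^ θ)) +
            ∑ i, ∑ j ∈ ({i}ᶜ : Finset (Fin m)),
              α i * β j * ((α j * β i) / (β j * α i)) ^ θ) *
          (Real.log n / n) ^ 2 := by
  set L : ℝ := Real.log n / n with hL
  have hn1 : (1:ℝ) < n := by exact_mod_cast Nat.lt_of_lt_of_le one_lt_two hn
  have hLpos : 0 < L := div_pos (Real.log_pos hn1) (by positivity)
  set p : Fin m → ℝ := fun i => α i * Real.log n / n with hpdef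
  set q : Fin m → ℝ := fun i => β i * Real.log n / n with hqdef
  have hpq : ∀ i, p i / q i = α i / β i := by
    intro i
    have hlog : Real.log n ≠ 0 := (Real.log_pos hn1).ne'
    have hn0 : (n:ℝ) ≠ 0 := by positivity
    simp only [hpdef, hqdef]
    field_simp
  have hp : ∀ i, p i = α i * L := fun i => mul_div_assoc _ _ _
  have hq : ∀ i, q i = β i * L := fun i => mul_div_assoc _ _ _
  have hppos : ∀ i, 0 < p i := fun i => by rw [hp]; exact mul_pos (hα i) hLpos
  have hqpos : ∀ i, 0 < q i := fun i => by rw [hq]; exact mul_pos (hβ i) hLpos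
  -- coefficients statements
  have hsp : (∑ k, ENNReal.ofReal (p k)) ≤ 1 := by
    rw [← ENNReal.ofReal_sum_of_nonneg (fun i _ => (hppos i).le), ← ENNReal.ofReal_one]
    exact ENNReal.ofReal_le_ofReal hp1
  have hsq : (∑ k, ENNReal.ofReal (q k)) ≤ 1 := by
    rw [← ENNReal.ofReal_sum_of_nonneg (fun i _ => (hqpos i).le), ← ENNReal.ofReal_one]
    exact ENNReal.ofReal_le_ofReal hq1
  have hcp : (1 - ∑ k, ENNReal.ofReal (p k)) ≠ ⊤ :=
    (lt_of_le_of_lt tsub_le_self ENNReal.one_lt_top).ne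
  have hcq : (1 - ∑ k, ENNReal.ofReal (q k)) ≠ ⊤ :=
    (lt_of_le_of_lt tsub_le_self ENNReal.one_lt_top).ne
  have hap : ∀ k : Fin m, ENNReal.ofReal (p k) ≠ ⊤ := fun k => ENNReal.ofReal_ne_top
  have haq : ∀ k : Fin m, ENNReal.ofReal (q k) ≠ ⊤ := fun k => ENNReal.ofReal_ne_top
  have hcpR : (1 - ∑ k, ENNReal.ofReal (p k)).toReal = 1 - ∑ k, p k := by
    rw [ENNReal.toReal_sub_of_le hsp ENNReal.one_ne_top, ENNReal.toReal_one,
      ENNReal.toReal_sum (fun k _ => hap k)]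
    simp [ENNReal.toReal_ofReal (hppos _).le]
  have hcqR : (1 - ∑ k, ENNReal.ofReal (q k)).toReal = 1 - ∑ k, q k := by
    rw [ENNReal.toReal_sub_of_le hsq ENNReal.one_ne_top, ENNReal.toReal_one,
      ENNReal.toReal_sum (fun k _ => haq k)]
    simp [ENNReal.toReal_ofReal (hqpos _).le]
  haveI : IsFiniteMeasure (Zdist p q) := finmix _ hcq _ haq _
  haveI : IsFiniteMeasure (Wdist p q) := finmix _ hcp _ hap _
  -- the product integral factorizes
  have hfact : (∫ x : ℝ × ℝ, Real.exp (θ * (x.1 - x.2)) ∂((Zdist p q).prod (Wdist p q)))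
      = (∫ t, Real.exp (θ * t) ∂(Zdist p q)) * (∫ t, Real.exp (-θ * t) ∂(Wdist p q)) := by
    rw [← MeasureTheory.integral_prod_mul (μ := Zdist p q) (ν := Wdist p q)
      (f := fun t => Real.exp (θ * t)) (g := fun t => Real.exp (-θ * t))]
    congr 1
    ext x
    rw [← Real.exp_add]
    ring_nf
  have hZ : (∫ t, Real.exp (θ * t) ∂(Zdist p q))
      = (1 - ∑ k, q k) + ∑ k, q k * (α k / β k) ^ θ := by
    rw [Zdist, intmix _ hcq _ haq _ (fun t => Real.exp (θ * t)) (by fun_prop)]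
    rw [hcqR]
    congr 1
    · simp
    · refine Finset.sum_congr rfl fun k _ => ?_
      rw [ENNReal.toReal_ofReal (hqpos k).le, ← hpq k,
        Real.rpow_def_of_pos (div_pos (hppos k) (hqpos k)),
        mul_comm θ (Real.log (p k / q k))]
  have hW : (∫ t, Real.exp (-θ * t) ∂(Wdist p q))
      = (1 - ∑ k, p k) + ∑ k, p k * (β k / α k) ^ θ := by
    rw [Wdist, intmix _ hcp _ hap _ (fun t => Real.exp (-θ * t)) (by fun_prop)]
    rw [hcpR]
    congr 1
    · simp
    · refine Finset.sum_congr rfl fun k _ => ?_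
      rw [ENNReal.toReal_ofReal (hppos k).le]
      congr 1
      have h1 : β k / α k = (p k / q k)⁻¹ := by rw [hpq, inv_div]
      rw [h1, Real.rpow_def_of_pos (inv_pos.2 (div_pos (hppos k) (hqpos k))), Real.log_inv]
      congr 1
      ring
  rw [hfact, hZ, hW]
  -- now pure algebra
  have hrs : ∀ i : Fin m, (α i / β i) ^ θ * (β i / α i) ^ θ = 1 := by
    intro i
    rw [← Real.mul_rpow (div_pos (hα i) (hβ i)).le (div_pos (hβ i) (hα i)).le,
      div_mul_div_comm, mul_comm (α i) (β i), div_self (mul_pos (hβ i) (hα i)).ne',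
      Real.one_rpow]
  have hcross : ∀ i j : Fin m, ((α j * β i) / (β j * α i)) ^ θ
      = (α j / β j) ^ θ * (β i / α i) ^ θ := by
    intro i j
    rw [← Real.mul_rpow (div_pos (hα j) (hβ j)).le (div_pos (hβ i) (hα i)).le,
      div_mul_div_comm]
  have hSS : (∑ i, β i * (α i / β i) ^ θ) * (∑ j, α j * (β j / α j) ^ θ)
      = (∑ i, α i * β i) + ∑ i, ∑ j ∈ ({i}ᶜ : Finset (Fin m)),
          α i * β j * ((α j * β i) / (β j * α i)) ^ θ := by
    rw [Finset.sum_mul_sum]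
    have step : ∀ i : Fin m, ∑ j, (β i * (α i / β i) ^ θ) * (α j * (β j / α j) ^ θ)
        = α i * β i + ∑ j ∈ ({i}ᶜ : Finset (Fin m)),
            (β i * (α i / β i) ^ θ) * (α j * (β j / α j) ^ θ) := by
      intro i
      rw [← Finset.sum_compl_add_sum ({i} : Finset (Fin m)), Finset.sum_singleton, add_comm]
      congr 1
      linear_combination (α i * β i) * hrs i
    rw [Finset.sum_congr rfl fun i _ => step i, Finset.sum_add_distrib]
    congr 1
    rw [Finset.sum_comm' (t := fun i => ({i}ᶜ : Finset (Fin m)))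
      (s' := fun j => ({j}ᶜ : Finset (Fin m))) (t' := Finset.univ)
      (by intro x y; simp [ne_comm, eq_comm])]
    refine Finset.sum_congr rfl fun i _ => Finset.sum_congr rfl fun j hj => ?_
    rw [hcross i j]
    ring
  have hqsum : ∑ k, q k = (∑ k, β k) * L := by
    rw [Finset.sum_mul]; exact Finset.sum_congr rfl fun k _ => hq k
  have hpsum : ∑ k, p k = (∑ k, α k) * L := by
    rw [Finset.sum_mul]; exact Finset.sum_congr rfl fun k _ => hp k
  have hqsum2 : ∀ r : Fin m → ℝ, ∑ k, q k * r k = (∑ k, β k * r k) * L := by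
    intro r; rw [Finset.sum_mul]
    exact Finset.sum_congr rfl fun k _ => by rw [hq]; ring
  have hpsum2 : ∀ r : Fin m → ℝ, ∑ k, p k * r k = (∑ k, α k * r k) * L := by
    intro r; rw [Finset.sum_mul]
    exact Finset.sum_congr rfl fun k _ => by rw [hp]; ring
  rw [hqsum2 (fun k => (α k / β k) ^ θ), hpsum2 (fun k => (β k / α k) ^ θ), hqsum, hpsum]
  rw [Finset.sum_add_distrib, Finset.sum_add_distrib]
  rw [show (∑ i, (∑ j, α j) * β i * (α i / β i) ^ θ) = (∑ j, α j) * ∑ i, β i * (α i / β i) ^ θ by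
      rw [Finset.mul_sum]; exact Finset.sum_congr rfl fun i _ => by ring,
    show (∑ i, (∑ j, β j) * α i * (β i / α i) ^ θ) = (∑ j, β j) * ∑ i, α i * (β i / α i) ^ θ by
      rw [Finset.mul_sum]; exact Finset.sum_congr rfl fun i _ => by ring]
  linear_combination (L^2) * hSS
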